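/- Weak spectral coercivity plus a uniform off-cluster bound implies spectral coercivity (Theorem 4.3, converse implication): Let ε > 0, M > 0 and let ψ : ℝ → (0,∞) be continuous and nonincreasing. Assume: (a) for every μ ∈ ℝ and every z ∈ X₂ supported in {k : |μ − λ k| < ε}, ‖C z‖² ≥ ψ(μ) · Σ_k |z k|²; and (b) for every μ ≥ 0 and every z ∈ X₂ supported in {k : |μ − λ k| ≥ ε}, ‖C z‖² ≤ M · Σ_k (λ k − μ)² |z k|². Define β(s) = (1/2) · (2M/ψ(s) + 1/ε²)⁻¹. Then for every nonzero z ∈ X₂ with Σ_k (λ k − μ(z))² |z k|² < β(μ(z)) · Σ_k |z k|², one has ‖C z‖² ≥ (1/4) · ψ(μ(z)) · Σ_k |z k|². -/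

import Mathlib

open scoped BigOperators

/-- Membership in `X₂`: the sequence of coefficients against eigenvalues squared is summable. -/
def MemX2 (lam : ℕ → ℝ) (z : ℕ → ℂ) : Prop :=
  Summable fun k => (lam k)^2 * ‖z k‖^2

/-- The `A`-frequency of a state `z`. -/
noncomputable def freq (lam : ℕ → ℝ) (z : ℕ → ℂ) : ℝ :=
  (∑' k, lam k * ‖z k‖^2) / ∑' k, ‖z k‖^2

set_option maxHeartbeats 1000000 in
/-- Weak spectral coercivity plus a uniform off-cluster bound implies spectral coercivity
(Theorem 4.3, converse implication). -/
theorem stmt10 (lam : ℕ → ℝ) (hmono : StrictMono lam) (hpos : ∀ k, 0 < lam k)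
    (hlim : Filter.Tendsto lam Filter.atTop Filter.atTop)
    (Y : Type) [NormedAddCommGroup Y] [InnerProductSpace ℂ Y] [CompleteSpace Y]
    (C : (ℕ → ℂ) →ₗ[ℂ] Y)
    (ε M : ℝ) (hε : 0 < ε) (hM : 0 < M)
    (ψ : ℝ → ℝ) (hψc : Continuous ψ) (hψm : Antitone ψ) (hψp : ∀ s, 0 < ψ s)
    (ha : ∀ μ : ℝ, ∀ z : ℕ → ℂ, MemX2 lam z → (∀ k, z k ≠ 0 → |μ - lam k| < ε) →
      ψ μ * (∑' k, ‖z k‖^2) ≤ ‖C z‖^2)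
    (hb : ∀ μ : ℝ, 0 ≤ μ → ∀ z : ℕ → ℂ, MemX2 lam z → (∀ k, z k ≠ 0 → ε ≤ |μ - lam k|) →
      ‖C z‖^2 ≤ M * ∑' k, (lam k - μ)^2 * ‖z k‖^2) :
    ∀ z : ℕ → ℂ, z ≠ 0 → MemX2 lam z →
      (∑' k, (lam k - freq lam z)^2 * ‖z k‖^2)
        < (1/2) * (2 * M / ψ (freq lam z) + 1 / ε^2)⁻¹ * (∑' k, ‖z k‖^2) →
      (1/4) * ψ (freq lam z) * (∑' k, ‖z k‖^2) ≤ ‖C z‖^2 := by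
  classical
  intro z hz hzX2 hsmall
  set μ := freq lam z with hμdef
  -- basic summability
  have h1le : ∀ᶠ k in Filter.atTop, 1 ≤ lam k := hlim.eventually_ge_atTop 1
  have hzsq : Summable fun k => ‖z k‖^2 := by
    apply Summable.of_norm_bounded_eventually (g := fun k => (lam k)^2 * ‖z k‖^2) hzX2
    rw [Nat.cofinite_eq_atTop]
    filter_upwards [h1le] with k hk
    rw [Real.norm_of_nonneg (by positivity)]
    have h2 : (1:ℝ) * ‖z k‖^2 ≤ lam k^2 * ‖z k‖^2 :=
      mul_le_mul_of_nonneg_right (by nlinarith) (by positivity)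
    linarith
  have hslam : Summable fun k => lam k * ‖z k‖^2 := by
    apply Summable.of_norm_bounded_eventually (g := fun k => (lam k)^2 * ‖z k‖^2) hzX2
    rw [Nat.cofinite_eq_atTop]
    filter_upwards [h1le] with k hk
    have hl := hpos k
    rw [Real.norm_of_nonneg (by positivity)]
    exact mul_le_mul_of_nonneg_right (by nlinarith) (by positivity)
  -- positivity of μ
  obtain ⟨k0, hk0⟩ := Function.ne_iff.mp hz
  have hk0' : z k0 ≠ 0 := by simpa using hk0
  have hk0pos : (0:ℝ) < ‖z k0‖^2 := pow_pos (norm_pos_iff.mpr hk0') 2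
  have hNpos : 0 < ∑' k, ‖z k‖^2 :=
    lt_of_lt_of_le hk0pos (Summable.le_tsum hzsq k0 fun j _ => by positivity)
  have hnumpos : 0 < ∑' k, lam k * ‖z k‖^2 := by
    have h0 : (0:ℝ) < lam k0 * ‖z k0‖^2 := mul_pos (hpos k0) hk0pos
    exact lt_of_lt_of_le h0 (Summable.le_tsum hslam k0 fun j _ => by
      have := (hpos j).le; positivity)
  have hμpos : 0 < μ := div_pos hnumpos hNpos
  have hp : 0 < ψ μ := hψp μ
  -- split z
  set z1 : ℕ → ℂ := fun k => if |μ - lam k| < ε then z k else 0 with hz1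
  set z2 : ℕ → ℂ := fun k => if |μ - lam k| < ε then 0 else z k with hz2
  have hz1k : ∀ k, z1 k = if |μ - lam k| < ε then z k else 0 := fun k => rfl
  have hz2k : ∀ k, z2 k = if |μ - lam k| < ε then 0 else z k := fun k => rfl
  have hsplit : z = z1 + z2 := by
    funext k
    by_cases h : |μ - lam k| < ε <;> simp [hz1k, hz2k, h]
  -- summability for pieces
  have hX21 : MemX2 lam z1 := by
    apply Summable.of_nonneg_of_le (fun k => by positivity) (fun k => ?_) hzX2
    by_cases h : |μ - lam k| < ε <;> simp [hz1k, h] <;> positivity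
  have hX22 : MemX2 lam z2 := by
    apply Summable.of_nonneg_of_le (fun k => by positivity) (fun k => ?_) hzX2
    by_cases h : |μ - lam k| < ε <;> simp [hz2k, h] <;> positivity
  have hs1 : Summable fun k => ‖z1 k‖^2 := by
    apply Summable.of_nonneg_of_le (fun k => by positivity) (fun k => ?_) hzsq
    by_cases h : |μ - lam k| < ε <;> simp [hz1k, h] <;> positivity
  have hs2 : Summable fun k => ‖z2 k‖^2 := by
    apply Summable.of_nonneg_of_le (fun k => by positivity) (fun k => ?_) hzsq
    by_cases h : |μ - lam k| < ε <;> simp [hz2k, h] <;> positivity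
  have hDsum : Summable fun k => (lam k - μ)^2 * ‖z k‖^2 := by
    apply Summable.congr (((hzX2.sub (hslam.mul_left (2*μ))).add (hzsq.mul_left (μ^2))))
    intro k; ring
  have hD2sum : Summable fun k => (lam k - μ)^2 * ‖z2 k‖^2 := by
    apply Summable.of_nonneg_of_le (fun k => by positivity) (fun k => ?_) hDsum
    by_cases h : |μ - lam k| < ε <;> simp [hz2k, h] <;> positivity
  -- notation
  set N := ∑' k, ‖z k‖^2 with hN
  set N1 := ∑' k, ‖z1 k‖^2 with hN1'
  set N2 := ∑' k, ‖z2 k‖^2 with hN2'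
  set D := ∑' k, (lam k - μ)^2 * ‖z k‖^2 with hD'
  set D2 := ∑' k, (lam k - μ)^2 * ‖z2 k‖^2 with hD2'
  clear_value N N1 N2 D D2
  have hN12 : N1 + N2 = N := by
    rw [hN1', hN2', hN, ← Summable.tsum_add hs1 hs2]
    apply tsum_congr
    intro k
    by_cases h : |μ - lam k| < ε <;> simp [hz1k, hz2k, h]
  have hD2D : D2 ≤ D := by
    rw [hD2', hD']
    apply Summable.tsum_le_tsum (fun k => ?_) hD2sum hDsum
    by_cases h : |μ - lam k| < ε <;> simp [hz2k, h] <;> positivity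
  have hDnonneg : 0 ≤ D := hD' ▸ tsum_nonneg fun k => by positivity
  have hεN2 : ε^2 * N2 ≤ D2 := by
    rw [hN2', hD2', ← tsum_mul_left]
    apply Summable.tsum_le_tsum (fun k => ?_) (hs2.mul_left _) hD2sum
    by_cases h : |μ - lam k| < ε
    · simp [hz2k, h]
    · have h' : ε ≤ |μ - lam k| := not_lt.mp h
      have h2 : ε^2 ≤ (lam k - μ)^2 := by
        nlinarith [abs_nonneg (μ - lam k), sq_abs (μ - lam k)]
      exact mul_le_mul_of_nonneg_right h2 (by positivity)
  -- apply hypotheses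
  have ha1 : ψ μ * N1 ≤ ‖C z1‖^2 := by
    rw [hN1']
    apply ha μ z1 hX21
    intro k hk
    by_contra h
    exact hk (by simp [hz1k, h])
  have hb2 : ‖C z2‖^2 ≤ M * D2 := by
    rw [hD2']
    apply hb μ hμpos.le z2 hX22
    intro k hk
    by_contra h
    exact hk (by simp [hz2k, not_le.mp h])
  -- Y-norm inequality
  have hCsum : C z = C z1 + C z2 := by rw [hsplit, map_add]
  have hC1 : ‖C z1‖ ≤ ‖C z‖ + ‖C z2‖ := by
    have : C z1 = C z - C z2 := by rw [hCsum]; abel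
    rw [this]
    exact norm_sub_le _ _
  have hC1sq : ‖C z1‖^2 ≤ 2*‖C z‖^2 + 2*‖C z2‖^2 := by
    nlinarith [norm_nonneg (C z1), norm_nonneg (C z), norm_nonneg (C z2),
      sq_nonneg (‖C z‖ - ‖C z2‖)]
  -- key arithmetic
  have hN2le : ε^2 * N2 ≤ D := le_trans hεN2 hD2D
  have hc : 0 < 2 * M / ψ μ + 1 / ε^2 := by positivity
  have hkey : D * (2 * M / ψ μ + 1 / ε^2) < N / 2 := by
    have h := mul_lt_mul_of_pos_right hsmall hc
    calc D * (2 * M / ψ μ + 1 / ε^2) < 1/2 * (2 * M / ψ μ + 1 / ε^2)⁻¹ * N *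
        (2 * M / ψ μ + 1 / ε^2) := h
      _ = N / 2 := by field_simp
  have hεsq : (0:ℝ) < ε^2 := by positivity
  have hkey2 : 2*M*D*ε^2 + D*ψ μ < ψ μ * N * ε^2 / 2 := by
    have h2 := mul_lt_mul_of_pos_right hkey (show (0:ℝ) < ψ μ * ε^2 by positivity)
    have hne : ψ μ ≠ 0 := hp.ne'
    have hεne : ε ≠ 0 := hε.ne'
    have hL : D * (2 * M / ψ μ + 1 / ε^2) * (ψ μ * ε^2) = 2*M*D*ε^2 + D*ψ μ := by
      field_simp
    have hR : N / 2 * (ψ μ * ε^2) = ψ μ * N * ε^2 / 2 := by ring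
    rw [hL, hR] at h2
    exact h2
  have hchain : ψ μ * N1 ≤ 2*‖C z‖^2 + 2*M*D2 := by
    calc ψ μ * N1 ≤ ‖C z1‖^2 := ha1
      _ ≤ 2*‖C z‖^2 + 2*‖C z2‖^2 := hC1sq
      _ ≤ 2*‖C z‖^2 + 2*M*D2 := by linarith [hb2]
  have hMD2 : M * D2 ≤ M * D := mul_le_mul_of_nonneg_left hD2D hM.le
  have f1 := mul_le_mul_of_nonneg_right hchain hεsq.le
  have f2 := mul_le_mul_of_nonneg_right hMD2 hεsq.le
  have f3 := mul_le_mul_of_nonneg_left hN2le hp.le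
  have hN12eq : ψ μ * N1 * ε^2 = ψ μ * N * ε^2 - ψ μ * N2 * ε^2 := by
    rw [show N1 = N - N2 from by linarith]; ring
  rw [← mul_le_mul_iff_of_pos_right hεsq]
  nlinarith [f1, f2, f3, hkey2, hN12eq]
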